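/- arXiv:1710.09177 — 2 statements merged into one kernel-verified Lean document; each statement's English description precedes it below -/
import Mathlib

section
/- Let X̄ have the piecewise density f_X̄(x) = (p_k/(h_k A))·(μ(λ)/(1 − e^{−μ(λ)}))·e^{−μ(λ)(x − s_{k−1}A)/(h_k A)} for x ∈ (s_{k−1}A, s_k A], k = 1,…,n, where λ ∈ (0, 1/2), ∑_{k=1}^n p_k (k−1) = α − λ, and μ(λ) is the unique positive solution of 1/μ − e^{−μ}/(1 − e^{−μ}) = λ. Then the average-power expression is met with equality: ∑_{k=1}^n ( (E[X̄·1{U = k}] − A·s_{k−1}·P(U = k))/h_k + (k−1)·A·P(U = k) ) = αA, where U = k iff X̄ lies in the k-th interval (with U = 1 iff X̄ ∈ [0, s_1 A] and U = k iff X̄ ∈ (s_{k−1}A, s_k A] for k ≥ 2). -/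
open MeasureTheory ProbabilityTheory Real Filter
open scoped NNReal ENNReal Classical

noncomputable section

/-- Kullback–Leibler divergence (Mathlib's `ProbabilityTheory.klDiv`). -/
def klDiv {α : Type*} [MeasurableSpace α] (μ ν : Measure α) : EReal :=
  if μ ≪ ν ∧ Integrable (llr μ ν) μ then ((∫ x, llr μ ν x ∂μ : ℝ) : EReal) else ⊤

/-- Mutual information of a joint law: KL divergence of the joint law from the
product of its marginals. -/
def mutualInfo {α β : Type*} [MeasurableSpace α] [MeasurableSpace β]
    (joint : Measure (α × β)) : EReal :=
  klDiv joint ((joint.map Prod.fst).prod (joint.map Prod.snd))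

/-- Partial sums `s_k = h_1 + ⋯ + h_k`. -/
def sCum {n : ℕ} (h : Fin n → ℝ) (k : ℕ) : ℝ :=
  ∑ i : Fin n, if i.val < k then h i else 0

/-- Joint law of `(X, Y)` with `Y = hᵀX + Z`, `Z ~ N(0, v)` independent of `X`. -/
def misoJoint {n : ℕ} (h : Fin n → ℝ) (v : ℝ≥0) (μ : Measure (Fin n → ℝ)) :
    Measure ((Fin n → ℝ) × ℝ) :=
  (μ.prod (gaussianReal 0 v)).map (fun p => (p.1, (∑ k, h k * p.1 k) + p.2))

/-- MISO capacity under peak-power constraint `A` and average-power constraint `E`. -/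
def misoCapacity {n : ℕ} (h : Fin n → ℝ) (v : ℝ≥0) (A E : ℝ) : EReal :=
  ⨆ μ ∈ {μ : Measure (Fin n → ℝ) | IsProbabilityMeasure μ ∧
      (∀ k, ∀ᵐ x ∂μ, x k ∈ Set.Icc 0 A) ∧ (∑ k, ∫ x, x k ∂μ) ≤ E},
    mutualInfo (misoJoint h v μ)

/-- MISO capacity under only an average-power constraint `E`. -/
def misoCapacityAvg {n : ℕ} (h : Fin n → ℝ) (v : ℝ≥0) (E : ℝ) : EReal :=
  ⨆ μ ∈ {μ : Measure (Fin n → ℝ) | IsProbabilityMeasure μ ∧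
      (∀ k, ∀ᵐ x ∂μ, 0 ≤ x k) ∧ (∑ k, ∫ x, x k ∂μ) ≤ E},
    mutualInfo (misoJoint h v μ)

/-- Joint law of `(X̄, X̄ + Z)` for the unit-gain SISO channel. -/
def sisoJoint (v : ℝ≥0) (μ : Measure ℝ) : Measure (ℝ × ℝ) :=
  (μ.prod (gaussianReal 0 v)).map (fun p => (p.1, p.1 + p.2))

/-- Unit-gain SISO capacity under peak-power constraint `A` and average-power
constraint `E`. -/
def sisoCapacity (v : ℝ≥0) (A E : ℝ) : EReal :=
  ⨆ μ ∈ {μ : Measure ℝ | IsProbabilityMeasure μ ∧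
      (∀ᵐ x ∂μ, x ∈ Set.Icc 0 A) ∧ (∫ x, x ∂μ) ≤ E},
    mutualInfo (sisoJoint v μ)

/-- Unit-gain SISO capacity under only an average-power constraint `E`. -/
def sisoCapacityAvg (v : ℝ≥0) (E : ℝ) : EReal :=
  ⨆ μ ∈ {μ : Measure ℝ | IsProbabilityMeasure μ ∧
      (∀ᵐ x ∂μ, 0 ≤ x) ∧ (∫ x, x ∂μ) ≤ E},
    mutualInfo (sisoJoint v μ)

/-- The interval `(s_{k-1} A, s_k A]` (with the first one being `[0, s_1 A]`)
corresponding to the event `U = k` (0-indexed: `k ∈ Fin n` stands for `k+1`). -/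
def uInterval {n : ℕ} (h : Fin n → ℝ) (A : ℝ) (k : Fin n) : Set ℝ :=
  if k.val = 0 then Set.Icc 0 (sCum h 1 * A)
  else Set.Ioc (sCum h k.val * A) (sCum h (k.val + 1) * A)

/-- The average input power `∑_k p_k ((E[X̄ | U=k] - A s_{k-1})/h_k + (k-1) A)`
consumed to generate a scalar law of `X̄`. -/
def avgPowerUse {n : ℕ} (h : Fin n → ℝ) (A : ℝ) (μ : Measure ℝ) : ℝ :=
  ∑ k : Fin n,
    (((∫ x in uInterval h A k, x ∂μ) - A * sCum h k.val * (μ (uInterval h A k)).toReal) / h k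
      + (k.val : ℝ) * A * (μ (uInterval h A k)).toReal)

/-- The threshold `α_th`. -/
def alphaTh {n : ℕ} (h : Fin n → ℝ) : ℝ :=
  1 / 2 + (1 / sCum h n) * ∑ k : Fin n, h k * (k.val : ℝ)


/-- The piecewise truncated-exponential density on `[0, s_n A]`: on the `k`-th
interval `(s_{k-1}A, s_k A]` it equals
`(p_k/(h_k A)) (m/(1-e^{-m})) e^{-m (x - s_{k-1}A)/(h_k A)}`. -/
def truncExpPiecewise {n : ℕ} (h : Fin n → ℝ) (A m : ℝ) (p : Fin n → ℝ) (x : ℝ) : ℝ :=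
  ∑ k : Fin n, (uInterval h A k).indicator
    (fun y => p k / (h k * A) * (m / (1 - Real.exp (-m))) *
      Real.exp (-(m * (y - sCum h k.val * A) / (h k * A)))) x

end

section aux

variable {n : ℕ}

lemma sCum_zero (h : Fin n → ℝ) : sCum h 0 = 0 := by simp [sCum]

lemma sCum_succ (h : Fin n → ℝ) (k : Fin n) :
    sCum h (k.val + 1) = sCum h k.val + h k := by
  unfold sCum
  have hk : h k = ∑ i : Fin n, if i = k then h i else 0 := by
    rw [Finset.sum_ite_eq' Finset.univ k h]; simp
  rw [hk, ← Finset.sum_add_distrib]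
  apply Finset.sum_congr rfl
  intro i _
  by_cases hik : i = k
  · subst hik; simp
  · have hv : i.val ≠ k.val := fun hv => hik (Fin.ext hv)
    by_cases hlt : i.val < k.val
    · simp [hlt, Nat.lt_succ_of_lt hlt, hik]
    · have h2 : ¬ i.val < k.val + 1 := by omega
      simp [hlt, h2, hik]

lemma sCum_mono (h : Fin n → ℝ) (hpos : ∀ k, 0 < h k) {j k : ℕ} (hjk : j ≤ k) :
    sCum h j ≤ sCum h k := by
  apply Finset.sum_le_sum
  intro i _
  by_cases hlt : i.val < j
  · simp [hlt, lt_of_lt_of_le hlt hjk]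
  · by_cases h2 : i.val < k
    · simp only [hlt, if_false, h2, if_true]; exact (hpos i).le
    · simp [hlt, h2]

lemma uInterval_measurableSet (h : Fin n → ℝ) (A : ℝ) (k : Fin n) :
    MeasurableSet (uInterval h A k) := by
  unfold uInterval
  split
  · exact measurableSet_Icc
  · exact measurableSet_Ioc

lemma mem_uInterval_le {h : Fin n → ℝ} {A : ℝ} {k : Fin n} {x : ℝ}
    (hx : x ∈ uInterval h A k) : x ≤ sCum h (k.val + 1) * A := by
  unfold uInterval at hx
  split at hx
  · next h0 => rw [h0]; exact hx.2
  · exact hx.2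

lemma mem_uInterval_gt {h : Fin n → ℝ} {A : ℝ} {k : Fin n} {x : ℝ}
    (hk : k.val ≠ 0) (hx : x ∈ uInterval h A k) : sCum h k.val * A < x := by
  unfold uInterval at hx
  rw [if_neg hk] at hx
  exact hx.1

lemma mem_uInterval_nonneg {h : Fin n → ℝ} (hpos : ∀ k, 0 < h k) {A : ℝ} (hA : 0 < A)
    {k : Fin n} {x : ℝ} (hx : x ∈ uInterval h A k) : 0 ≤ x := by
  by_cases hk : k.val = 0
  · unfold uInterval at hx
    rw [if_pos hk] at hx
    exact hx.1
  · have := mem_uInterval_gt hk hx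
    have h0 : (0:ℝ) ≤ sCum h k.val * A := by
      have := sCum_mono h hpos (Nat.zero_le k.val)
      rw [sCum_zero] at this
      nlinarith
    linarith

lemma uInterval_disjoint {h : Fin n → ℝ} (hpos : ∀ k, 0 < h k) {A : ℝ} (hA : 0 < A)
    {j k : Fin n} (hjk : j ≠ k) {x : ℝ} (hx : x ∈ uInterval h A k) :
    x ∉ uInterval h A j := by
  intro hxj
  rcases lt_or_gt_of_ne (fun hv => hjk (Fin.ext hv)) with hlt | hlt
  · -- j < k, so k.val ≠ 0
    have hk0 : k.val ≠ 0 := by omega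
    have h1 : x ≤ sCum h (j.val + 1) * A := mem_uInterval_le hxj
    have h2 : sCum h k.val * A < x := mem_uInterval_gt hk0 hx
    have h3 : sCum h (j.val + 1) ≤ sCum h k.val := sCum_mono h hpos (by omega)
    nlinarith
  · have hj0 : j.val ≠ 0 := by omega
    have h1 : x ≤ sCum h (k.val + 1) * A := mem_uInterval_le hx
    have h2 : sCum h j.val * A < x := mem_uInterval_gt hj0 hxj
    have h3 : sCum h (k.val + 1) ≤ sCum h j.val := sCum_mono h hpos (by omega)
    nlinarith

end aux


theorem piecewise_density_average_power (n : ℕ) (hn : 2 ≤ n) (h : Fin n → ℝ)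
    (hord : ∀ i j : Fin n, i ≤ j → h j ≤ h i) (hpos : ∀ k, 0 < h k)
    (A α l m : ℝ) (hA : 0 < A) (hα : 0 < α) (hl : l ∈ Set.Ioo (0 : ℝ) (1 / 2))
    (hm : 0 < m) (hmeq : 1 / m - Real.exp (-m) / (1 - Real.exp (-m)) = l)
    (p : Fin n → ℝ) (hppos : ∀ k, 0 < p k) (hpsum : (∑ k, p k) = 1)
    (hpavg : (∑ k : Fin n, p k * (k.val : ℝ)) = α - l) :
    avgPowerUse h A
        (MeasureTheory.volume.withDensity fun x =>
          ENNReal.ofReal (truncExpPiecewise h A m p x))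
      = α * A := by
  obtain ⟨hl0, hl2⟩ := hl
  set E : ℝ := Real.exp (-m) with hEdef
  have hE1 : E < 1 := by
    rw [hEdef]
    calc Real.exp (-m) < Real.exp 0 := Real.exp_lt_exp.mpr (by linarith)
    _ = 1 := Real.exp_zero
  have hE0 : 0 < E := Real.exp_pos _
  have h1E : (0:ℝ) < 1 - E := by linarith
  have h1E' : (1:ℝ) - E ≠ 0 := ne_of_gt h1E
  have hm' : m ≠ 0 := ne_of_gt hm
  have hA' : A ≠ 0 := ne_of_gt hA
  set f : ℝ → ℝ := truncExpPiecewise h A m p with hfdef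
  -- nonnegativity of the density
  have hfnn : ∀ x, 0 ≤ f x := by
    intro x
    apply Finset.sum_nonneg
    intro k _
    apply Set.indicator_nonneg
    intro y _
    have := (hpos k)
    have hD : 0 ≤ p k / (h k * A) * (m / (1 - E)) := by
      apply mul_nonneg
      · exact div_nonneg (hppos k).le (by positivity)
      · exact div_nonneg hm.le h1E.le
    exact mul_nonneg hD (Real.exp_nonneg _)
  -- measurability of the density
  have hfmeas : Measurable f := by
    apply Finset.measurable_sum
    intro k _
    exact Measurable.indicator (by fun_prop) (uInterval_measurableSet h A k)
  -- on each interval the density coincides with a single exponential piece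
  have hfg : ∀ (k : Fin n) (x : ℝ), x ∈ uInterval h A k →
      f x = p k / (h k * A) * (m / (1 - E)) *
        Real.exp (-(m * (x - sCum h k.val * A) / (h k * A))) := by
    intro k x hx
    rw [hfdef]
    unfold truncExpPiecewise
    rw [Finset.sum_eq_single k]
    · rw [Set.indicator_of_mem hx]
    · intro j _ hjk
      exact Set.indicator_of_notMem (uInterval_disjoint hpos hA hjk hx) _
    · intro habs
      exact absurd (Finset.mem_univ k) habs
  -- restrictions of volume to uInterval and to the Ioc agree
  have hres : ∀ k : Fin n, MeasureTheory.volume.restrict (uInterval h A k) =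
      MeasureTheory.volume.restrict
        (Set.Ioc (sCum h k.val * A) (sCum h (k.val + 1) * A)) := by
    intro k
    unfold uInterval
    split
    · next h0 =>
      rw [h0, sCum_zero, zero_mul]
      exact (MeasureTheory.restrict_Ioc_eq_restrict_Icc).symm
    · rfl
  have hIocsub : ∀ k : Fin n,
      Set.Ioc (sCum h k.val * A) (sCum h (k.val + 1) * A) ⊆ uInterval h A k := by
    intro k
    unfold uInterval
    split
    · next h0 =>
      rw [h0, sCum_zero, zero_mul]
      exact Set.Ioc_subset_Icc_self
    · exact subset_rfl
  -- per-interval endpoints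
  have hkey : ∀ k : Fin n,
      ((MeasureTheory.volume.withDensity fun x => ENNReal.ofReal (f x))
          (uInterval h A k)).toReal = p k ∧
      (∫ x in uInterval h A k, x
          ∂(MeasureTheory.volume.withDensity fun x => ENNReal.ofReal (f x)))
        = p k * (sCum h k.val * A) + p k * (h k * A) * l := by
    intro k
    set a : ℝ := sCum h k.val * A with hadef
    set b : ℝ := sCum h (k.val + 1) * A with hbdef
    set b' : ℝ := h k * A with hb'def
    have hb'0 : 0 < b' := by have := hpos k; positivity
    have hb' : b' ≠ 0 := ne_of_gt hb'0
    have hba : b = a + b' := by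
      rw [hbdef, hadef, hb'def, sCum_succ h k]; ring
    have hab : a ≤ b := by rw [hba]; linarith
    set D : ℝ := p k / b' * (m / (1 - E)) with hDdef
    set g : ℝ → ℝ := fun y => D * Real.exp (-(m * (y - a) / b')) with hgdef
    have hgcont : Continuous g := by rw [hgdef]; fun_prop
    have hfgIoc : ∀ x ∈ Set.Ioc a b, f x = g x := fun x hx =>
      hfg k x (hIocsub k hx)
    -- exp values at endpoints
    have hexpa : Real.exp (-(m * (a - a) / b')) = 1 := by
      rw [sub_self, mul_zero, zero_div, neg_zero, Real.exp_zero]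
    have hexpb : Real.exp (-(m * (b - a) / b')) = E := by
      rw [hba]
      have : m * (a + b' - a) / b' = m := by field_simp; ring
      rw [this, hEdef]
    constructor
    · -- the mass
      have hFder : ∀ y ∈ Set.uIcc a b, HasDerivAt
          (fun z => D * (-(b' / m) * Real.exp (-(m * (z - a) / b')))) (g y) y := by
        intro y _
        have h1 : HasDerivAt (fun z : ℝ => -(m * (z - a) / b')) (-(m / b')) y := by
          have : HasDerivAt (fun z : ℝ => m * (z - a) / b') (m / b') y := by
            have := (((hasDerivAt_id y).sub_const a).const_mul m).div_const b'
            simpa using this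
          exact this.neg
        have h2 := (h1.exp.const_mul (-(b' / m))).const_mul D
        refine h2.congr_deriv ?_
        rw [hgdef]
        field_simp
      have hFint : ∫ x in a..b, g x
          = D * (-(b' / m) * Real.exp (-(m * (b - a) / b')))
            - D * (-(b' / m) * Real.exp (-(m * (a - a) / b'))) :=
        intervalIntegral.integral_eq_sub_of_hasDerivAt hFder
          (hgcont.intervalIntegrable a b)
      have hgval : ∫ x in Set.Ioc a b, g x = p k := by
        rw [← intervalIntegral.integral_of_le hab, hFint, hexpa, hexpb, hDdef]
        field_simp
        ring
      have hfint : MeasureTheory.IntegrableOn f (Set.Ioc a b) := by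
        apply MeasureTheory.IntegrableOn.congr_fun
          (hgcont.integrableOn_Ioc) _ measurableSet_Ioc
        intro x hx
        exact (hfgIoc x hx).symm
      rw [MeasureTheory.withDensity_apply _ (uInterval_measurableSet h A k), hres k,
        ← MeasureTheory.ofReal_integral_eq_lintegral_ofReal hfint
          (Filter.Eventually.of_forall fun x => hfnn x)]
      rw [MeasureTheory.setIntegral_congr_fun measurableSet_Ioc hfgIoc, hgval,
        ENNReal.toReal_ofReal (hppos k).le]
    · -- the first moment
      have hwd : (MeasureTheory.volume.withDensity fun x => ENNReal.ofReal (f x))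
          = MeasureTheory.volume.withDensity fun x => ((f x).toNNReal : ℝ≥0∞) := rfl
      rw [hwd, setIntegral_withDensity_eq_setIntegral_smul
        hfmeas.real_toNNReal (fun x => x) (uInterval_measurableSet h A k)]
      have hsmul : ∀ x : ℝ, (f x).toNNReal • x = f x * x := by
        intro x
        rw [NNReal.smul_def, Real.coe_toNNReal _ (hfnn x), smul_eq_mul]
      calc ∫ x in uInterval h A k, (f x).toNNReal • x
          = ∫ x in uInterval h A k, f x * x := by
            exact MeasureTheory.integral_congr_ae
              (Filter.Eventually.of_forall fun x => hsmul x)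
        _ = ∫ x in Set.Ioc a b, f x * x := by rw [hres k]
        _ = ∫ x in Set.Ioc a b, g x * x := by
            apply MeasureTheory.setIntegral_congr_fun measurableSet_Ioc
            intro x hx
            simp only [hfgIoc x hx]
        _ = ∫ x in a..b, g x * x := (intervalIntegral.integral_of_le hab).symm
        _ = D * (-(b * b' / m + (b' / m) ^ 2) * Real.exp (-(m * (b - a) / b')))
            - D * (-(a * b' / m + (b' / m) ^ 2) * Real.exp (-(m * (a - a) / b'))) := by
            refine intervalIntegral.integral_eq_sub_of_hasDerivAt
              (f := fun z => D * (-(z * b' / m + (b' / m) ^ 2)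
                * Real.exp (-(m * (z - a) / b')))) ?_ ?_
            · intro y _
              have h1 : HasDerivAt (fun z : ℝ => -(m * (z - a) / b')) (-(m / b')) y := by
                have : HasDerivAt (fun z : ℝ => m * (z - a) / b') (m / b') y := by
                  have := (((hasDerivAt_id y).sub_const a).const_mul m).div_const b'
                  simpa using this
                exact this.neg
              have hu : HasDerivAt (fun z : ℝ => -(z * b' / m + (b' / m) ^ 2))
                  (-(b' / m)) y := by
                have : HasDerivAt (fun z : ℝ => z * b' / m + (b' / m) ^ 2)
                    (b' / m) y := by
                  have := (((hasDerivAt_id y).mul_const b').div_const m).add_const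
                    ((b' / m) ^ 2)
                  simpa using this
                exact this.neg
              have h2 := (hu.mul h1.exp).const_mul D
              refine h2.congr_deriv ?_
              rw [hgdef]
              field_simp
              ring
            · exact (hgcont.mul continuous_id).intervalIntegrable a b
        _ = p k * a + p k * b' * l := by
            rw [hexpa, hexpb, hDdef, hba, ← hmeq]
            field_simp
            ring
  -- sum everything up
  unfold avgPowerUse
  have hsum : ∀ k : Fin n,
      ((∫ x in uInterval h A k, x
          ∂(MeasureTheory.volume.withDensity fun x => ENNReal.ofReal (f x)))
        - A * sCum h k.val
          * (((MeasureTheory.volume.withDensity fun x => ENNReal.ofReal (f x))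
              (uInterval h A k)).toReal)) / h k
      + (k.val : ℝ) * A
          * (((MeasureTheory.volume.withDensity fun x => ENNReal.ofReal (f x))
              (uInterval h A k)).toReal)
      = p k * (A * l) + A * (p k * (k.val : ℝ)) := by
    intro k
    obtain ⟨hmass, hint⟩ := hkey k
    rw [hmass, hint]
    have hk' : h k ≠ 0 := ne_of_gt (hpos k)
    field_simp
    ring
  calc (∑ k : Fin n,
      (((∫ x in uInterval h A k, x
          ∂(MeasureTheory.volume.withDensity fun x => ENNReal.ofReal (f x)))
        - A * sCum h k.val
          * (((MeasureTheory.volume.withDensity fun x => ENNReal.ofReal (f x))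
              (uInterval h A k)).toReal)) / h k
      + (k.val : ℝ) * A
          * (((MeasureTheory.volume.withDensity fun x => ENNReal.ofReal (f x))
              (uInterval h A k)).toReal)))
      = ∑ k : Fin n, (p k * (A * l) + A * (p k * (k.val : ℝ))) :=
        Finset.sum_congr rfl fun k _ => hsum k
    _ = (∑ k : Fin n, p k) * (A * l) + A * ∑ k : Fin n, p k * (k.val : ℝ) := by
        rw [Finset.sum_add_distrib, ← Finset.sum_mul, ← Finset.mul_sum]
    _ = α * A := by rw [hpsum, hpavg]; ring
end

section
/- Let n ≥ 2 and let β be a real number with 0 < β < n/2. Then there exists a probability vector p = (p_1,…,p_n) (p_k ≥ 0, ∑_{k=1}^n p_k = 1) such that ∑_{k=1}^n p_k·(k−1) = β. Moreover, the map λ ↦ 1 − log( μ(λ)/(1 − e^{−μ(λ)}) ) − μ(λ)·e^{−μ(λ)}/(1 − e^{−μ(λ)}), where μ(λ) is the unique positive solution of 1/μ − e^{−μ}/(1 − e^{−μ}) = λ, is strictly increasing on (0, 1/2) and tends to 0 as λ → 1/2⁻. -/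
open Real Filter Set

/-- Key inequality: `x^2 * e^x < (e^x - 1)^2` for `x > 0`. -/
lemma pv_key_ineq {x : ℝ} (hx : 0 < x) : x ^ 2 * Real.exp x < (Real.exp x - 1) ^ 2 := by
  have hs : x / 2 < Real.sinh (x / 2) := Real.self_lt_sinh_iff.2 (by linarith)
  have h2 : Real.exp x - 1 = Real.exp (x / 2) * (Real.exp (x / 2) - Real.exp (-(x / 2))) := by
    rw [mul_sub, ← Real.exp_add, ← Real.exp_add]
    norm_num
  have hx2 : x < Real.exp (x / 2) - Real.exp (-(x / 2)) := by
    have := hs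
    rw [Real.sinh_eq] at this
    linarith
  have hxpos : (0:ℝ) < Real.exp (x / 2) - Real.exp (-(x / 2)) := lt_trans hx hx2
  have hE : Real.exp x = Real.exp (x / 2) * Real.exp (x / 2) := by
    rw [← Real.exp_add]; norm_num
  rw [h2, mul_pow, hE]
  have h3 : x ^ 2 < (Real.exp (x / 2) - Real.exp (-(x / 2))) ^ 2 := by nlinarith
  have hEp : (0:ℝ) < Real.exp (x / 2) := Real.exp_pos _
  nlinarith [mul_lt_mul_of_pos_left h3 (mul_pos hEp hEp)]

/-- `sinh x < x * cosh x` for `x > 0`. -/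
lemma pv_sinh_lt_mul_cosh {x : ℝ} (hx : 0 < x) : Real.sinh x < x * Real.cosh x := by
  have hmono : StrictMonoOn (fun y => y * Real.cosh y - Real.sinh y) (Set.Ici (0:ℝ)) := by
    apply strictMonoOn_of_deriv_pos (convex_Ici 0)
    · exact ((continuous_id.mul Real.continuous_cosh).sub Real.continuous_sinh).continuousOn
    · intro y hy
      rw [interior_Ici] at hy
      have hder : HasDerivAt (fun y => y * Real.cosh y - Real.sinh y) (y * Real.sinh y) y := by
        have h1 := (hasDerivAt_id y).mul (Real.hasDerivAt_cosh y)
        have h2 := h1.sub (Real.hasDerivAt_sinh y)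
        refine h2.congr_deriv ?_
        simp only [id_eq]
        ring
      rw [hder.deriv]
      exact mul_pos hy (Real.sinh_pos_iff.2 hy)
  have := hmono (Set.self_mem_Ici) (Set.mem_Ici.2 hx.le) hx
  simpa using this

/-- `h μ < 1/2` where `h μ = 1/μ - 1/(e^μ - 1)`. -/
lemma pv_h_lt_half {μ : ℝ} (hμ : 0 < μ) : μ⁻¹ - (Real.exp μ - 1)⁻¹ < 1 / 2 := by
  have hE1 : (0:ℝ) < Real.exp μ - 1 := by
    have := Real.add_one_lt_exp (ne_of_gt hμ); linarith
  have hkey := pv_sinh_lt_mul_cosh (x := μ / 2) (by linarith)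
  rw [Real.sinh_eq, Real.cosh_eq] at hkey
  have hprod : Real.exp (μ / 2) * Real.exp (μ / 2) = Real.exp μ := by
    rw [← Real.exp_add]; norm_num
  have hprod2 : Real.exp (μ / 2) * Real.exp (-(μ / 2)) = 1 := by
    rw [← Real.exp_add]; norm_num
  have hEp : (0:ℝ) < Real.exp (μ / 2) := Real.exp_pos _
  -- multiply hkey by 2 * exp(μ/2)
  have h4 : Real.exp μ - 1 < μ / 2 * (Real.exp μ + 1) := by nlinarith
  have heq : μ⁻¹ - (Real.exp μ - 1)⁻¹ = ((Real.exp μ - 1) - μ) / (μ * (Real.exp μ - 1)) := by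
    field_simp
  rw [heq, div_lt_iff₀ (by positivity)]
  nlinarith

/-- `0 < h μ`. -/
lemma pv_h_pos {μ : ℝ} (hμ : 0 < μ) : 0 < μ⁻¹ - (Real.exp μ - 1)⁻¹ := by
  have hE1 : μ < Real.exp μ - 1 := by
    have := Real.add_one_lt_exp (ne_of_gt hμ); linarith
  have : (Real.exp μ - 1)⁻¹ < μ⁻¹ := by
    apply inv_strictAnti₀ hμ hE1
  linarith

/-- `h` is strictly antitone on `(0, ∞)`. -/
lemma pv_h_anti : StrictAntiOn (fun μ : ℝ => μ⁻¹ - (Real.exp μ - 1)⁻¹) (Set.Ioi (0:ℝ)) := by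
  apply strictAntiOn_of_deriv_neg (convex_Ioi 0)
  · apply ContinuousOn.sub
    · exact continuousOn_inv₀.mono (fun x hx => ne_of_gt hx)
    · apply ContinuousOn.inv₀
      · exact (Real.continuous_exp.sub continuous_const).continuousOn
      · intro x hx
        have := Real.add_one_lt_exp (ne_of_gt (Set.mem_Ioi.1 hx))
        have hx' := Set.mem_Ioi.1 hx
        intro h; nlinarith
  · intro x hx
    rw [interior_Ioi] at hx
    have hx0 : (0:ℝ) < x := hx
    have hE1 : (0:ℝ) < Real.exp x - 1 := by
      have := Real.add_one_lt_exp (ne_of_gt hx0); linarith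
    have hder : HasDerivAt (fun μ : ℝ => μ⁻¹ - (Real.exp μ - 1)⁻¹)
        (-(x⁻¹ ^ 2) - (-(Real.exp x) / (Real.exp x - 1) ^ 2)) x := by
      have h1 : HasDerivAt (fun μ : ℝ => μ⁻¹) (-(x⁻¹ ^ 2)) x := by
        simpa [sq] using hasDerivAt_inv (ne_of_gt hx0)
      have h2 : HasDerivAt (fun μ : ℝ => (Real.exp μ - 1)⁻¹)
          (-(Real.exp x) / (Real.exp x - 1) ^ 2) x := by
        have := ((Real.hasDerivAt_exp x).sub_const 1).inv (ne_of_gt hE1)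
        exact this
      exact h1.sub h2
    rw [hder.deriv]
    have hkey := pv_key_ineq hx0
    have h5 : Real.exp x / (Real.exp x - 1) ^ 2 < x⁻¹ ^ 2 := by
      rw [div_lt_iff₀ (by positivity), inv_pow, inv_mul_eq_div, lt_div_iff₀ (by positivity)]
      nlinarith
    have : -(x⁻¹ ^ 2) - -(Real.exp x) / (Real.exp x - 1) ^ 2
        = Real.exp x / (Real.exp x - 1) ^ 2 - x⁻¹ ^ 2 := by ring
    rw [this]
    linarith

/-- The entropy expressed in terms of `μ` (simplified form). -/
noncomputable def pvG (μ : ℝ) : ℝ :=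
  1 - Real.log μ + Real.log (Real.exp μ - 1) - μ - μ * (Real.exp μ - 1)⁻¹

lemma pv_exp_sub_one_pos {μ : ℝ} (hμ : 0 < μ) : 0 < Real.exp μ - 1 := by
  have := Real.add_one_lt_exp (ne_of_gt hμ); linarith

/-- The statement's expression equals `pvG μ` for `μ > 0`. -/
lemma pvG_eq {μ : ℝ} (hμ : 0 < μ) :
    1 - Real.log (μ / (1 - Real.exp (-μ))) - μ * Real.exp (-μ) / (1 - Real.exp (-μ)) = pvG μ := by
  have hE : (0:ℝ) < Real.exp μ := Real.exp_pos μ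
  have hE1 : (0:ℝ) < Real.exp μ - 1 := pv_exp_sub_one_pos hμ
  have hne : 1 - Real.exp (-μ) = (Real.exp μ - 1) / Real.exp μ := by
    rw [Real.exp_neg]; field_simp
  have hne0 : (1:ℝ) - Real.exp (-μ) ≠ 0 := by rw [hne]; positivity
  have hlog : Real.log (μ / (1 - Real.exp (-μ)))
      = Real.log μ - Real.log (Real.exp μ - 1) + μ := by
    rw [hne, div_div_eq_mul_div, Real.log_div (by positivity) (ne_of_gt hE1),
      Real.log_mul (ne_of_gt hμ) (ne_of_gt hE), Real.log_exp]
    ring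
  have hterm : μ * Real.exp (-μ) / (1 - Real.exp (-μ)) = μ * (Real.exp μ - 1)⁻¹ := by
    rw [hne, Real.exp_neg]
    field_simp
  rw [hlog, hterm, pvG]
  ring

/-- `pvG` is strictly antitone on `(0, ∞)`. -/
lemma pvG_anti : StrictAntiOn pvG (Set.Ioi (0:ℝ)) := by
  apply strictAntiOn_of_deriv_neg (convex_Ioi 0)
  · have hlog1 : ContinuousOn (fun μ : ℝ => Real.log μ) (Set.Ioi (0:ℝ)) :=
      Real.continuousOn_log.mono (fun x hx => ne_of_gt hx)
    have hinvc : ContinuousOn (fun μ : ℝ => (Real.exp μ - 1)⁻¹) (Set.Ioi (0:ℝ)) := by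
      apply ContinuousOn.inv₀ ((Real.continuous_exp.sub continuous_const).continuousOn)
      intro x hx
      exact ne_of_gt (pv_exp_sub_one_pos (Set.mem_Ioi.1 hx))
    have hlog2 : ContinuousOn (fun μ : ℝ => Real.log (Real.exp μ - 1)) (Set.Ioi (0:ℝ)) := by
      apply Real.continuousOn_log.comp ((Real.continuous_exp.sub continuous_const).continuousOn)
      intro x hx
      exact ne_of_gt (pv_exp_sub_one_pos (Set.mem_Ioi.1 hx))
    exact ((((continuousOn_const.sub hlog1).add hlog2).sub continuousOn_id).sub
      (continuousOn_id.mul hinvc))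
  · intro x hx
    rw [interior_Ioi] at hx
    have hx0 : (0:ℝ) < x := hx
    have hE : (0:ℝ) < Real.exp x := Real.exp_pos x
    have hE1 : (0:ℝ) < Real.exp x - 1 := pv_exp_sub_one_pos hx0
    have hder : HasDerivAt pvG
        (0 - x⁻¹ + Real.exp x / (Real.exp x - 1) - 1
          - (1 * (Real.exp x - 1)⁻¹ + x * (-(Real.exp x) / (Real.exp x - 1) ^ 2))) x := by
      have h1 : HasDerivAt Real.log x⁻¹ x := Real.hasDerivAt_log (ne_of_gt hx0)
      have h2 : HasDerivAt (fun μ : ℝ => Real.log (Real.exp μ - 1))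
          (Real.exp x / (Real.exp x - 1)) x := by
        have := ((Real.hasDerivAt_exp x).sub_const 1).log (ne_of_gt hE1)
        simpa using this
      have h3 : HasDerivAt (fun μ : ℝ => (Real.exp μ - 1)⁻¹)
          (-(Real.exp x) / (Real.exp x - 1) ^ 2) x := by
        have := ((Real.hasDerivAt_exp x).sub_const 1).inv (ne_of_gt hE1)
        exact this
      have h4 : HasDerivAt (fun μ : ℝ => μ * (Real.exp μ - 1)⁻¹)
          (1 * (Real.exp x - 1)⁻¹ + x * (-(Real.exp x) / (Real.exp x - 1) ^ 2)) x :=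
        (hasDerivAt_id x).mul h3
      exact ((((hasDerivAt_const x (1:ℝ)).sub h1).add h2).sub (hasDerivAt_id x)).sub h4
    rw [hder.deriv]
    have hkey := pv_key_ineq hx0
    have hmain : x * Real.exp x / (Real.exp x - 1) ^ 2 < x⁻¹ := by
      rw [div_lt_iff₀ (by positivity), inv_mul_eq_div, lt_div_iff₀ hx0]
      nlinarith
    have hsimp : 0 - x⁻¹ + Real.exp x / (Real.exp x - 1) - 1
        - (1 * (Real.exp x - 1)⁻¹ + x * (-(Real.exp x) / (Real.exp x - 1) ^ 2))
        = x * Real.exp x / (Real.exp x - 1) ^ 2 - x⁻¹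
          + (Real.exp x / (Real.exp x - 1) - 1 - (Real.exp x - 1)⁻¹) := by
      ring
    have hzero : Real.exp x / (Real.exp x - 1) - 1 - (Real.exp x - 1)⁻¹ = 0 := by
      field_simp
      ring
    rw [hsimp, hzero]
    linarith

/-- `pvG → 0` as `μ → 0⁺`. -/
lemma pvG_tendsto : Tendsto pvG (nhdsWithin 0 (Set.Ioi 0)) (nhds 0) := by
  have hslope : Tendsto (fun μ : ℝ => (Real.exp μ - 1) / μ) (nhdsWithin 0 (Set.Ioi 0)) (nhds 1) := by
    have h := (Real.hasDerivAt_exp 0)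
    rw [hasDerivAt_iff_tendsto_slope] at h
    have h2 : Tendsto (slope Real.exp 0) (nhdsWithin 0 (Set.Ioi 0)) (nhds (Real.exp 0)) :=
      h.mono_left (nhdsWithin_mono 0 (fun x hx => ne_of_gt (Set.mem_Ioi.1 hx)))
    simp only [Real.exp_zero] at h2
    apply h2.congr'
    filter_upwards [self_mem_nhdsWithin] with x hx
    simp [slope_def_field, Real.exp_zero]
  have hlog : Tendsto (fun μ : ℝ => Real.log ((Real.exp μ - 1) / μ))
      (nhdsWithin 0 (Set.Ioi 0)) (nhds 0) := by
    have := (Real.continuousAt_log one_ne_zero).tendsto.comp hslope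
    simpa [Function.comp_def] using this
  have hinv : Tendsto (fun μ : ℝ => μ * (Real.exp μ - 1)⁻¹)
      (nhdsWithin 0 (Set.Ioi 0)) (nhds 1) := by
    have h := hslope.inv₀ one_ne_zero
    simp only [inv_one] at h
    apply h.congr'
    filter_upwards [self_mem_nhdsWithin] with x hx
    have hx0 : (0:ℝ) < x := hx
    have hE1 := pv_exp_sub_one_pos hx0
    field_simp
  have hid : Tendsto (fun μ : ℝ => μ) (nhdsWithin 0 (Set.Ioi 0)) (nhds 0) :=
    tendsto_id.mono_left nhdsWithin_le_nhds
  have hcomb : Tendsto (fun μ : ℝ =>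
      1 + Real.log ((Real.exp μ - 1) / μ) - μ - μ * (Real.exp μ - 1)⁻¹)
      (nhdsWithin 0 (Set.Ioi 0)) (nhds 0) := by
    have := (((tendsto_const_nhds (x := (1:ℝ))).add hlog).sub hid).sub hinv
    simpa using this
  apply hcomb.congr'
  filter_upwards [self_mem_nhdsWithin] with x hx
  have hx0 : (0:ℝ) < x := hx
  have hE1 := pv_exp_sub_one_pos hx0
  rw [Real.log_div (ne_of_gt hE1) (ne_of_gt hx0)]
  rw [pvG]
  ring

/-- Converting the statement's implicit equation form to the `h` form. -/
lemma pv_h_conv {μ : ℝ} (hμ : 0 < μ) :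
    1 / μ - Real.exp (-μ) / (1 - Real.exp (-μ)) = μ⁻¹ - (Real.exp μ - 1)⁻¹ := by
  have hE : (0:ℝ) < Real.exp μ := Real.exp_pos μ
  have hE1 : (0:ℝ) < Real.exp μ - 1 := pv_exp_sub_one_pos hμ
  rw [Real.exp_neg]
  rw [one_div]
  congr 1
  rw [eq_comm, inv_eq_iff_eq_inv, eq_comm]
  field_simp

theorem prob_vector_exists_and_entropy_monotone (n : ℕ) (hn : 2 ≤ n)
    (β : ℝ) (hβ0 : 0 < β) (hβ : β < (n : ℝ) / 2)
    (μf : ℝ → ℝ)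
    (hμf : ∀ l ∈ Set.Ioo (0 : ℝ) (1 / 2),
      0 < μf l ∧ 1 / μf l - Real.exp (-μf l) / (1 - Real.exp (-μf l)) = l) :
    (∃ p : Fin n → ℝ, (∀ k, 0 ≤ p k) ∧ (∑ k, p k) = 1 ∧
      (∑ k : Fin n, p k * (k.val : ℝ)) = β) ∧
    StrictMonoOn (fun l =>
        1 - Real.log (μf l / (1 - Real.exp (-μf l)))
          - μf l * Real.exp (-μf l) / (1 - Real.exp (-μf l)))
      (Set.Ioo (0 : ℝ) (1 / 2)) ∧
    Tendsto (fun l =>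
        1 - Real.log (μf l / (1 - Real.exp (-μf l)))
          - μf l * Real.exp (-μf l) / (1 - Real.exp (-μf l)))
      (nhdsWithin (1 / 2) (Set.Iio (1 / 2))) (nhds 0) := by
  -- preliminaries about μf
  have hμf' : ∀ l ∈ Set.Ioo (0 : ℝ) (1 / 2),
      0 < μf l ∧ (μf l)⁻¹ - (Real.exp (μf l) - 1)⁻¹ = l := by
    intro l hl
    obtain ⟨h1, h2⟩ := hμf l hl
    exact ⟨h1, by rw [← pv_h_conv h1]; exact h2⟩
  -- monotonicity of μf (antitone)
  have hμf_anti : ∀ l₁ ∈ Set.Ioo (0:ℝ) (1/2), ∀ l₂ ∈ Set.Ioo (0:ℝ) (1/2),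
      l₁ < l₂ → μf l₂ < μf l₁ := by
    intro l₁ hl₁ l₂ hl₂ hlt
    obtain ⟨hp₁, he₁⟩ := hμf' l₁ hl₁
    obtain ⟨hp₂, he₂⟩ := hμf' l₂ hl₂
    by_contra hcon
    push_neg at hcon
    rcases eq_or_lt_of_le hcon with heq | hlt2
    · rw [← heq] at he₂
      rw [he₁] at he₂; linarith
    · have := pv_h_anti (Set.mem_Ioi.2 hp₁) (Set.mem_Ioi.2 hp₂) hlt2
      simp only at this
      rw [he₁, he₂] at this
      linarith
  refine ⟨?_, ?_, ?_⟩
  · -- existence of probability vector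
    have hn1 : (1:ℝ) ≤ (n:ℝ) - 1 := by
      have : (2:ℝ) ≤ (n:ℝ) := by exact_mod_cast hn
      linarith
    have hn1pos : (0:ℝ) < (n:ℝ) - 1 := by linarith
    set c : ℝ := β / ((n:ℝ) - 1) with hc
    have hc0 : 0 ≤ c := le_of_lt (div_pos hβ0 hn1pos)
    have hc1 : c ≤ 1 := by
      rw [hc, div_le_one hn1pos]
      have : (n:ℝ) / 2 ≤ (n:ℝ) - 1 := by
        have : (2:ℝ) ≤ (n:ℝ) := by exact_mod_cast hn
        linarith
      linarith
    have hnpos : 0 < n := by omega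
    set i : Fin n := ⟨n - 1, by omega⟩ with hi
    set j : Fin n := ⟨0, hnpos⟩ with hj
    have hij : j ≠ i := by
      simp only [hi, hj, Fin.mk.injEq, ne_eq]
      omega
    refine ⟨Pi.single j (1 - c) + Pi.single i c, ?_, ?_, ?_⟩
    · intro k
      simp only [Pi.add_apply]
      apply add_nonneg
      · rcases eq_or_ne k j with rfl | hk
        · simp; linarith
        · rw [Pi.single_eq_of_ne hk]
      · rcases eq_or_ne k i with rfl | hk
        · simpa using hc0
        · rw [Pi.single_eq_of_ne hk]
    · simp only [Pi.add_apply]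
      rw [Finset.sum_add_distrib, Finset.sum_pi_single', Finset.sum_pi_single']
      simp only [Finset.mem_univ, if_true]
      ring
    · have heq1 : ∀ k : Fin n, ((Pi.single j (1 - c) + Pi.single i c : Fin n → ℝ) k) * (k.val : ℝ)
          = (Pi.single j ((1 - c) * (j.val : ℝ)) : Fin n → ℝ) k + (Pi.single i (c * (i.val : ℝ)) : Fin n → ℝ) k := by
        intro k
        simp only [Pi.add_apply, add_mul]
        congr 1
        · rcases eq_or_ne k j with rfl | hk
          · simp
          · rw [Pi.single_eq_of_ne hk, Pi.single_eq_of_ne hk, zero_mul]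
        · rcases eq_or_ne k i with rfl | hk
          · simp
          · rw [Pi.single_eq_of_ne hk, Pi.single_eq_of_ne hk, zero_mul]
      rw [Finset.sum_congr rfl (fun k _ => heq1 k)]
      rw [Finset.sum_add_distrib, Finset.sum_pi_single', Finset.sum_pi_single']
      simp only [Finset.mem_univ, if_true]
      have hjval : (j.val : ℝ) = 0 := by simp [hj]
      have hival : (i.val : ℝ) = (n:ℝ) - 1 := by
        simp only [hi]
        have : ((n - 1 : ℕ) : ℝ) = (n:ℝ) - 1 := by
          have : 1 ≤ n := by omega
          push_cast [this]
          ring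
        exact this
      rw [hjval, hival, mul_zero, zero_add, hc]
      field_simp
  · -- strict monotonicity
    intro l₁ hl₁ l₂ hl₂ hlt
    obtain ⟨hp₁, _⟩ := hμf' l₁ hl₁
    obtain ⟨hp₂, _⟩ := hμf' l₂ hl₂
    simp only
    rw [pvG_eq hp₁, pvG_eq hp₂]
    exact pvG_anti (Set.mem_Ioi.2 hp₂) (Set.mem_Ioi.2 hp₁) (hμf_anti l₁ hl₁ l₂ hl₂ hlt)
  · -- the limit
    have hhalf_mem : ∀ᶠ l in nhdsWithin (1/2 : ℝ) (Set.Iio (1/2)), l ∈ Set.Ioo (0:ℝ) (1/2) :=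
      Ioo_mem_nhdsLT_of_mem (by norm_num : (1/2 : ℝ) ∈ Set.Ioc (0:ℝ) (1/2))
    have hμf_tendsto : Tendsto μf (nhdsWithin (1/2 : ℝ) (Set.Iio (1/2)))
        (nhdsWithin 0 (Set.Ioi 0)) := by
      apply tendsto_nhdsWithin_of_tendsto_nhds_of_eventually_within
      · rw [tendsto_order]
        constructor
        · intro a ha
          filter_upwards [hhalf_mem] with l hl
          exact lt_of_lt_of_le ha (le_of_lt (hμf' l hl).1)
        · intro b hb
          have hhbpos : 0 < b⁻¹ - (Real.exp b - 1)⁻¹ := pv_h_pos hb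
          have hhb' : b⁻¹ - (Real.exp b - 1)⁻¹ < 1/2 := pv_h_lt_half hb
          have hmem : Set.Ioo (b⁻¹ - (Real.exp b - 1)⁻¹) (1/2 : ℝ)
              ∈ nhdsWithin (1/2 : ℝ) (Set.Iio (1/2)) :=
            Ioo_mem_nhdsLT_of_mem (Set.mem_Ioc.2 ⟨hhb', le_refl _⟩)
          filter_upwards [hmem] with l hl
          have hl' : l ∈ Set.Ioo (0:ℝ) (1/2) := ⟨lt_trans hhbpos hl.1, hl.2⟩
          obtain ⟨hp, he⟩ := hμf' l hl'
          by_contra hcon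
          push_neg at hcon
          rcases eq_or_lt_of_le hcon with heq | hlt2
          · rw [← heq] at he
            rw [he] at hl
            exact lt_irrefl _ hl.1
          · have := pv_h_anti (Set.mem_Ioi.2 hb) (Set.mem_Ioi.2 hp) hlt2
            simp only at this
            rw [he] at this
            exact absurd hl.1 (not_lt.2 this.le)
      · filter_upwards [hhalf_mem] with l hl
        exact Set.mem_Ioi.2 (hμf' l hl).1
    have hcomp : Tendsto (fun l => pvG (μf l)) (nhdsWithin (1/2 : ℝ) (Set.Iio (1/2)))
        (nhds 0) := pvG_tendsto.comp hμf_tendsto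
    apply hcomp.congr'
    filter_upwards [hhalf_mem] with l hl
    exact (pvG_eq (hμf' l hl).1).symm
end
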